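/- Let V be an n-dimensional real inner product space, θ a quadratic form on V, τ a covector on V, and suppose θ − τ⊗τ is p-positive semi-definite (every sum of p eigenvalues of the symmetric matrix of θ − τ⊗τ is nonnegative). Let F_θ be the associated operator on p-forms. Then for every (p−1)-form ξ, the p-form τ ∧ ξ lies in the image of F_θ. -/

import Mathlib

/-- The operator `F_θ = Σ θ_{jk} ω^k ∧ (e_j ⌟ ·)` on coefficient arrays of `p`-forms. -/
def FopMat {n p : ℕ} (θ : Matrix (Fin n) (Fin n) ℝ)
    (g : (Fin p → Fin n) → ℝ) : (Fin p → Fin n) → ℝ :=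
  fun J => ∑ a : Fin p, ∑ i : Fin n, θ (J a) i * g (Function.update J a i)

/-- `g` is the fully antisymmetric coefficient array of a form. -/
def IsAlt {n p : ℕ} (g : (Fin p → Fin n) → ℝ) : Prop :=
  ∀ (J : Fin p → Fin n) (σ : Equiv.Perm (Fin p)),
    g (J ∘ σ) = ((Equiv.Perm.sign σ : ℤ) : ℝ) * g J

/-- Coefficients of the wedge product `τ ∧ ξ` of a covector `τ` with an `m`-form `ξ`. -/
def wedge1 {n m : ℕ} (τ : Fin n → ℝ) (ξ : (Fin m → Fin n) → ℝ) :
    (Fin (m + 1) → Fin n) → ℝ :=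
  fun J => ∑ a : Fin (m + 1), (-1 : ℝ) ^ (a : ℕ) * τ (J a) * ξ (fun b => J (a.succAbove b))

namespace Stmt5Aux
open Finset Function Equiv

variable {n p m : ℕ}


/-- update commutes with precomposition by a permutation. -/
theorem update_comp_perm (J : Fin p → Fin n) (σ : Equiv.Perm (Fin p)) (a : Fin p) (i : Fin n) :
    Function.update (J ∘ σ) a i = (Function.update J (σ a) i) ∘ σ := by
  funext b
  rcases eq_or_ne b a with rfl | hb
  · simp
  · simp [Function.update_of_ne hb, Function.update_of_ne (fun h => hb (σ.injective h)),
      Function.comp]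

/-- `FopMat` preserves alternation. -/
theorem isAlt_fopMat (θ : Matrix (Fin n) (Fin n) ℝ) {g : (Fin p → Fin n) → ℝ}
    (hg : IsAlt g) : IsAlt (FopMat θ g) := by
  intro J σ
  unfold FopMat
  have step : ∀ a : Fin p, ∑ i : Fin n, θ ((J ∘ σ) a) i * g (Function.update (J ∘ σ) a i)
      = ((Equiv.Perm.sign σ : ℤ) : ℝ) * ∑ i : Fin n, θ (J (σ a)) i * g (Function.update J (σ a) i) := by
    intro a
    rw [Finset.mul_sum]
    refine Finset.sum_congr rfl fun i _ => ?_
    have h1 : (J ∘ σ) a = J (σ a) := rfl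
    rw [h1, update_comp_perm, hg]
    ring
  calc ∑ a : Fin p, ∑ i : Fin n, θ ((J ∘ σ) a) i * g (Function.update (J ∘ σ) a i)
      = ∑ a : Fin p, (fun a' => ((Equiv.Perm.sign σ : ℤ) : ℝ) * ∑ i : Fin n, θ (J a') i * g (Function.update J a' i)) (σ a) := by
        exact Finset.sum_congr rfl fun a _ => step a
    _ = ∑ a : Fin p, ((Equiv.Perm.sign σ : ℤ) : ℝ) * ∑ i : Fin n, θ (J a) i * g (Function.update J a i) := by
        exact Equiv.sum_comp σ (fun a' => ((Equiv.Perm.sign σ : ℤ) : ℝ) * ∑ i : Fin n, θ (J a') i * g (Function.update J a' i))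
    _ = ((Equiv.Perm.sign σ : ℤ) : ℝ) * ∑ a : Fin p, ∑ i : Fin n, θ (J a) i * g (Function.update J a i) := by
        rw [Finset.mul_sum]

theorem isAlt_add {g h : (Fin p → Fin n) → ℝ} (hg : IsAlt g) (hh : IsAlt h) :
    IsAlt (g + h) := by
  intro J σ
  simp only [Pi.add_apply, hg J σ, hh J σ]
  ring

theorem isAlt_smul (c : ℝ) {g : (Fin p → Fin n) → ℝ} (hg : IsAlt g) : IsAlt (c • g) := by
  intro J σ
  simp only [Pi.smul_apply, smul_eq_mul, hg J σ]
  ring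

theorem isAlt_zero : IsAlt (0 : (Fin p → Fin n) → ℝ) := by
  intro J σ; simp

/-- an alternating array vanishes at non-injective index tuples. -/
theorem isAlt_eq_zero_of_not_injective {g : (Fin p → Fin n) → ℝ} (hg : IsAlt g)
    {K : Fin p → Fin n} (hK : ¬ Function.Injective K) : g K = 0 := by
  rw [Function.not_injective_iff] at hK
  obtain ⟨b, c, hbc, hne⟩ := hK
  have hcomp : K ∘ (Equiv.swap b c) = K := by
    funext x
    rcases eq_or_ne x b with rfl | hxb
    · simp [Equiv.swap_apply_left, hbc]
    rcases eq_or_ne x c with rfl | hxc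
    · simp [Equiv.swap_apply_right, hbc]
    · simp [Equiv.swap_apply_of_ne_of_ne hxb hxc]
  have := hg K (Equiv.swap b c)
  rw [hcomp, Equiv.Perm.sign_swap hne] at this
  push_cast at this
  linarith


/-- The involutive change of variables `(J, i) ↦ (update J a i, J a)`. -/
def updEquiv (a : Fin p) : ((Fin p → Fin n) × Fin n) ≃ ((Fin p → Fin n) × Fin n) :=
  Function.Involutive.toPerm (fun q => (Function.update q.1 a q.2, q.1 a)) (by
    intro q
    simp [Function.update_idem, Function.update_eq_self])

@[simp] theorem updEquiv_apply (a : Fin p) (J : Fin p → Fin n) (i : Fin n) :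
    updEquiv a (J, i) = (Function.update J a i, J a) := rfl

theorem fopMat_symm {θ : Matrix (Fin n) (Fin n) ℝ} (hθ : θ.IsSymm)
    (g h : (Fin p → Fin n) → ℝ) :
    ∑ J : Fin p → Fin n, FopMat θ g J * h J
      = ∑ J : Fin p → Fin n, g J * FopMat θ h J := by
  unfold FopMat
  simp only [Finset.sum_mul, Finset.mul_sum]
  rw [Finset.sum_comm]
  conv_rhs => rw [Finset.sum_comm]
  refine Finset.sum_congr rfl fun a _ => ?_
  rw [← Fintype.sum_prod_type (f := fun q : (Fin p → Fin n) × Fin n =>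
    (θ (q.1 a) q.2 * g (Function.update q.1 a q.2)) * h q.1)]
  rw [← Fintype.sum_prod_type (f := fun q : (Fin p → Fin n) × Fin n =>
    g q.1 * (θ (q.1 a) q.2 * h (Function.update q.1 a q.2)))]
  refine Fintype.sum_equiv (updEquiv a) _ _ (fun q => ?_)
  obtain ⟨J, i⟩ := q
  simp only [updEquiv_apply, Function.update_self, Function.update_idem,
    Function.update_eq_self]
  rw [hθ.apply (J a) i]
  ring

theorem fopMat_matrix_add (A B : Matrix (Fin n) (Fin n) ℝ) (g : (Fin p → Fin n) → ℝ) (J) :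
    FopMat (A + B) g J = FopMat A g J + FopMat B g J := by
  unfold FopMat
  rw [← Finset.sum_add_distrib]
  refine Finset.sum_congr rfl fun a _ => ?_
  rw [← Finset.sum_add_distrib]
  refine Finset.sum_congr rfl fun i _ => ?_
  rw [Matrix.add_apply]; ring

theorem fopMat_add (θ : Matrix (Fin n) (Fin n) ℝ) (g h : (Fin p → Fin n) → ℝ) :
    FopMat θ (g + h) = FopMat θ g + FopMat θ h := by
  funext J
  simp only [FopMat, Pi.add_apply, mul_add, Finset.sum_add_distrib]

theorem fopMat_smul (θ : Matrix (Fin n) (Fin n) ℝ) (c : ℝ) (g : (Fin p → Fin n) → ℝ) :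
    FopMat θ (c • g) = c • FopMat θ g := by
  funext J
  simp only [FopMat, Pi.smul_apply, smul_eq_mul, Finset.mul_sum]
  refine Finset.sum_congr rfl fun a _ => Finset.sum_congr rfl fun i _ => by ring



theorem insertNth_eq_cons_comp (a : Fin (m + 1)) (j : Fin n) (J' : Fin m → Fin n) :
    a.insertNth j J' = (Fin.cons j J') ∘ (Fin.cycleRange a) := by
  funext b
  rcases eq_or_ne b a with rfl | hb
  · simp [Fin.insertNth_apply_same, Fin.cycleRange_self]
  · obtain ⟨c, rfl⟩ := Fin.exists_succAbove_eq (Ne.symm hb).symm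
    rw [Fin.insertNth_apply_succAbove]
    rcases lt_or_ge (Fin.castSucc c) a with hc | hc
    · rw [Fin.succAbove_of_castSucc_lt _ _ hc]
      simp only [Function.comp_apply, Fin.cycleRange_of_lt hc, Fin.coeSucc_eq_succ,
        Fin.cons_succ]
    · rw [Fin.succAbove_of_le_castSucc _ _ hc]
      have : a < Fin.succ c := lt_of_le_of_lt hc ((Fin.castSucc_lt_succ (i := c)))
      simp only [Function.comp_apply, Fin.cycleRange_of_gt this, Fin.cons_succ]

theorem isAlt_insertNth {g : (Fin (m + 1) → Fin n) → ℝ} (hg : IsAlt g)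
    (a : Fin (m + 1)) (j : Fin n) (J' : Fin m → Fin n) :
    g (a.insertNth j J') = (-1 : ℝ) ^ (a : ℕ) * g (Fin.cons j J') := by
  rw [insertNth_eq_cons_comp, hg (Fin.cons j J') (Fin.cycleRange a), Fin.sign_cycleRange]
  norm_num

/-- reindexing a `(m+1)`-tuple as its value at `a` and the rest. -/
def consEquiv (a : Fin (m + 1)) : (Fin (m + 1) → Fin n) ≃ (Fin n × (Fin m → Fin n)) where
  toFun J := (J a, fun c => J (a.succAbove c))
  invFun q := a.insertNth q.1 q.2
  left_inv J := Fin.insertNth_self_removeNth a J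
  right_inv q := by
    obtain ⟨j, J'⟩ := q
    simp

theorem sum_insertNth (a : Fin (m + 1)) (f : (Fin (m + 1) → Fin n) → ℝ) :
    ∑ J : Fin (m + 1) → Fin n, f J
      = ∑ j : Fin n, ∑ J' : Fin m → Fin n, f (a.insertNth j J') := by
  rw [← Fintype.sum_prod_type (f := fun q : Fin n × (Fin m → Fin n) => f (a.insertNth q.1 q.2))]
  exact Fintype.sum_equiv (consEquiv a) _ _
    (fun J => by
      simp only [consEquiv, Equiv.coe_fn_mk]
      exact congrArg f (Fin.insertNth_self_removeNth a J).symm)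

/-- contraction of `g` with `τ` in the first slot. -/
noncomputable def contr (τ : Fin n → ℝ) (g : (Fin (m + 1) → Fin n) → ℝ) :
    (Fin m → Fin n) → ℝ :=
  fun J' => ∑ j : Fin n, τ j * g (Fin.cons j J')

theorem sum_fop_vecMulVec (τ : Fin n → ℝ) {g : (Fin (m + 1) → Fin n) → ℝ} (hg : IsAlt g) :
    ∑ J : Fin (m + 1) → Fin n, FopMat (Matrix.vecMulVec τ τ) g J * g J
      = ∑ _a : Fin (m + 1), ∑ J' : Fin m → Fin n, (contr τ g J') ^ 2 := by
  unfold FopMat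
  simp only [Matrix.vecMulVec_apply, Finset.sum_mul]
  rw [Finset.sum_comm]
  refine Finset.sum_congr rfl fun a _ => ?_
  rw [sum_insertNth a]
  have key : ∀ (j : Fin n) (J' : Fin m → Fin n) (i : Fin n),
      τ ((a.insertNth j J' : Fin (m + 1) → Fin n) a) * τ i
          * g (Function.update (a.insertNth j J') a i) * g (a.insertNth j J')
      = (τ j * g (Fin.cons j J')) * (τ i * g (Fin.cons i J')) := by
    intro j J' i
    rw [Fin.insertNth_apply_same, Fin.update_insertNth, isAlt_insertNth hg,
      isAlt_insertNth hg]
    have h1 : ((-1 : ℝ) ^ (a : ℕ)) * ((-1 : ℝ) ^ (a : ℕ)) = 1 := by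
      rw [← mul_pow]; norm_num
    linear_combination (τ j * τ i * g (Fin.cons i J') * g (Fin.cons j J')) * h1
  calc ∑ j : Fin n, ∑ J' : Fin m → Fin n, ∑ i : Fin n,
        τ ((a.insertNth j J' : Fin (m + 1) → Fin n) a) * τ i
          * g (Function.update (a.insertNth j J') a i) * g (a.insertNth j J')
      = ∑ j : Fin n, ∑ J' : Fin m → Fin n,
          ∑ i : Fin n, (τ j * g (Fin.cons j J')) * (τ i * g (Fin.cons i J')) := by
        exact Finset.sum_congr rfl fun j _ => Finset.sum_congr rfl fun J' _ =>
          Finset.sum_congr rfl fun i _ => key j J' i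
    _ = ∑ J' : Fin m → Fin n, ∑ j : Fin n,
          ∑ i : Fin n, (τ j * g (Fin.cons j J')) * (τ i * g (Fin.cons i J')) := by
        exact Finset.sum_comm
    _ = ∑ J' : Fin m → Fin n, (contr τ g J') ^ 2 := by
        refine Finset.sum_congr rfl fun J' _ => ?_
        rw [← Finset.sum_mul_sum]
        rw [sq, contr]

theorem sum_wedge_mul (τ : Fin n → ℝ) (ξ : (Fin m → Fin n) → ℝ)
    {g : (Fin (m + 1) → Fin n) → ℝ} (hg : IsAlt g) :
    ∑ J : Fin (m + 1) → Fin n, wedge1 τ ξ J * g J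
      = ∑ _a : Fin (m + 1), ∑ J' : Fin m → Fin n, ξ J' * contr τ g J' := by
  unfold wedge1
  simp only [Finset.sum_mul]
  rw [Finset.sum_comm]
  refine Finset.sum_congr rfl fun a _ => ?_
  rw [sum_insertNth a]
  have key : ∀ (j : Fin n) (J' : Fin m → Fin n),
      (-1 : ℝ) ^ (a : ℕ) * τ ((a.insertNth j J' : Fin (m + 1) → Fin n) a) * ξ (fun b => (a.insertNth j J' : Fin (m + 1) → Fin n) (a.succAbove b))
        * g (a.insertNth j J')
      = ξ J' * (τ j * g (Fin.cons j J')) := by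
    intro j J'
    rw [Fin.insertNth_apply_same, isAlt_insertNth hg]
    have h2 : (fun b => (a.insertNth j J' : Fin (m + 1) → Fin n) (a.succAbove b)) = J' := by
      funext b; rw [Fin.insertNth_apply_succAbove]
    rw [h2]
    have h1 : ((-1 : ℝ) ^ (a : ℕ)) * ((-1 : ℝ) ^ (a : ℕ)) = 1 := by
      rw [← mul_pow]; norm_num
    linear_combination (τ j * ξ J' * g (Fin.cons j J')) * h1
  calc ∑ j : Fin n, ∑ J' : Fin m → Fin n,
        (-1 : ℝ) ^ (a : ℕ) * τ ((a.insertNth j J' : Fin (m + 1) → Fin n) a) * ξ (fun b => (a.insertNth j J' : Fin (m + 1) → Fin n) (a.succAbove b))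
          * g (a.insertNth j J')
      = ∑ j : Fin n, ∑ J' : Fin m → Fin n, ξ J' * (τ j * g (Fin.cons j J')) := by
        exact Finset.sum_congr rfl fun j _ => Finset.sum_congr rfl fun J' _ => key j J'
    _ = ∑ J' : Fin m → Fin n, ξ J' * contr τ g J' := by
        rw [Finset.sum_comm]
        refine Finset.sum_congr rfl fun J' _ => ?_
        rw [contr, Finset.mul_sum]



/-- transformation of a `p`-array by a change of basis `u` in each slot. -/
noncomputable def Tmap (u : Fin n → Fin n → ℝ) (g : (Fin p → Fin n) → ℝ) :
    (Fin p → Fin n) → ℝ :=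
  fun K => ∑ J : Fin p → Fin n, (∏ b : Fin p, u (K b) (J b)) * g J

theorem isAlt_tmap (u : Fin n → Fin n → ℝ) {g : (Fin p → Fin n) → ℝ} (hg : IsAlt g) :
    IsAlt (Tmap u g) := by
  intro K σ
  unfold Tmap
  rw [Finset.mul_sum]
  have key : ∀ J : Fin p → Fin n,
      (fun J => (∏ b : Fin p, u ((K ∘ σ) b) (J b)) * g J) (J ∘ σ)
        = ((Equiv.Perm.sign σ : ℤ) : ℝ) * ((∏ b : Fin p, u (K b) (J b)) * g J) := by
    intro J
    simp only [Function.comp_apply]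
    rw [hg J σ]
    have : (∏ b : Fin p, u (K (σ b)) (J (σ b))) = ∏ b : Fin p, u (K b) (J b) :=
      Equiv.prod_comp σ (fun b => u (K b) (J b))
    rw [this]; ring
  calc ∑ J : Fin p → Fin n, (∏ b : Fin p, u ((K ∘ σ) b) (J b)) * g J
      = ∑ J : Fin p → Fin n,
          ((Equiv.Perm.sign σ : ℤ) : ℝ) * ((∏ b : Fin p, u (K b) (J b)) * g J) := by
        rw [← Equiv.sum_comp (Equiv.arrowCongr σ.symm (Equiv.refl (Fin n)))
          (fun J => (∏ b : Fin p, u ((K ∘ σ) b) (J b)) * g J)]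
        refine Finset.sum_congr rfl fun J _ => ?_
        have harr : (Equiv.arrowCongr σ.symm (Equiv.refl (Fin n))) J = J ∘ σ := by
          funext b; simp [Equiv.arrowCongr]
        rw [harr]
        exact key J
    _ = _ := rfl

/-- sum over all functions of a product factors as a product of sums. -/
theorem sum_prod_fun (f : Fin p → Fin n → ℝ) :
    ∑ K : Fin p → Fin n, ∏ b : Fin p, f b (K b) = ∏ b : Fin p, ∑ i : Fin n, f b i := by
  classical
  rw [← Finset.sum_prod_piFinset Finset.univ f]
  refine Finset.sum_congr ?_ fun K _ => rfl
  simp [Fintype.piFinset_univ]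

section spectral

variable (η : Matrix (Fin n) (Fin n) ℝ) (u : Fin n → Fin n → ℝ) (lam : Fin n → ℝ)

/-- isometry of `Tmap` for an orthogonal `u` (completeness relation). -/
theorem tmap_isometry
    (hcomp : ∀ k l : Fin n, ∑ r : Fin n, u r k * u r l = if k = l then 1 else 0)
    (g h : (Fin p → Fin n) → ℝ) :
    ∑ K : Fin p → Fin n, Tmap u g K * Tmap u h K
      = ∑ J : Fin p → Fin n, g J * h J := by
  unfold Tmap
  simp only [Finset.sum_mul, Finset.mul_sum]
  rw [Finset.sum_comm]
  have hK : ∀ J J' : Fin p → Fin n,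
      ∑ K : Fin p → Fin n, (∏ b : Fin p, u (K b) (J b)) * (∏ b : Fin p, u (K b) (J' b))
        = if J = J' then 1 else 0 := by
    intro J J'
    have hpm : ∀ K : Fin p → Fin n,
        (∏ b : Fin p, u (K b) (J b)) * (∏ b : Fin p, u (K b) (J' b))
          = ∏ b : Fin p, (u (K b) (J b) * u (K b) (J' b)) := fun K =>
      (Finset.prod_mul_distrib).symm
    simp_rw [hpm]
    rw [sum_prod_fun (fun b i => u i (J b) * u i (J' b))]
    by_cases h : J = J'
    · subst h
      simp_rw [hcomp]
      simp
    · obtain ⟨b, hb⟩ : ∃ b, J b ≠ J' b := by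
        by_contra hc; push_neg at hc; exact h (funext hc)
      rw [if_neg h]
      exact Finset.prod_eq_zero (Finset.mem_univ b) (by rw [hcomp, if_neg hb])
  refine Finset.sum_congr rfl fun J _ => ?_
  rw [Finset.sum_comm]
  calc ∑ J' : Fin p → Fin n, ∑ K : Fin p → Fin n,
        ((∏ b : Fin p, u (K b) (J' b)) * g J') * ((∏ b : Fin p, u (K b) (J b)) * h J)
      = ∑ J' : Fin p → Fin n, (g J' * h J) * (if J' = J then 1 else 0) := by
        refine Finset.sum_congr rfl fun J' _ => ?_
        rw [← hK J' J, Finset.mul_sum]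
        exact Finset.sum_congr rfl fun K _ => by ring
    _ = g J * h J := by
        simp

theorem tmap_fopMat (hsym : ∀ k l, η k l = η l k)
    (heig : ∀ r k, ∑ j : Fin n, η k j * u r j = lam r * u r k)
    (g : (Fin p → Fin n) → ℝ) (K : Fin p → Fin n) :
    Tmap u (FopMat η g) K = (∑ a : Fin p, lam (K a)) * Tmap u g K := by
  unfold Tmap FopMat
  rw [Finset.sum_mul]
  simp only [Finset.mul_sum]
  rw [Finset.sum_comm]
  refine Finset.sum_congr rfl fun a _ => ?_
  have cov : ∀ F : ((Fin p → Fin n) × Fin n) → ℝ,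
      ∑ J : Fin p → Fin n, ∑ i : Fin n, F (J, i)
        = ∑ J : Fin p → Fin n, ∑ i : Fin n, F (Function.update J a i, J a) := by
    intro F
    calc ∑ J : Fin p → Fin n, ∑ i : Fin n, F (J, i)
        = ∑ q : (Fin p → Fin n) × Fin n, F q := (Fintype.sum_prod_type _).symm
      _ = ∑ q : (Fin p → Fin n) × Fin n, F (updEquiv a q) :=
          (Equiv.sum_comp (updEquiv a) F).symm
      _ = ∑ J : Fin p → Fin n, ∑ i : Fin n, F (Function.update J a i, J a) :=
          Fintype.sum_prod_type _
  have hPupd : ∀ (J : Fin p → Fin n) (i : Fin n),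
      (∏ b : Fin p, u (K b) (Function.update J a i b))
        = u (K a) i * ∏ b ∈ Finset.univ.erase a, u (K b) (J b) := by
    intro J i
    rw [← Finset.mul_prod_erase Finset.univ (fun b => u (K b) (Function.update J a i b))
      (Finset.mem_univ a)]
    congr 1
    · rw [Function.update_self]
    · exact Finset.prod_congr rfl fun b hb =>
        by rw [Function.update_of_ne (Finset.mem_erase.1 hb).1]
  calc ∑ J : Fin p → Fin n, ∑ i : Fin n,
        (∏ b : Fin p, u (K b) (J b)) * (η (J a) i * g (Function.update J a i))
      = ∑ J : Fin p → Fin n, ∑ i : Fin n,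
          (∏ b : Fin p, u (K b) (Function.update J a i b))
            * (η ((Function.update J a i) a) (J a)
              * g (Function.update (Function.update J a i) a (J a))) := by
        exact cov (fun q => (∏ b : Fin p, u (K b) (q.1 b)) * (η (q.1 a) q.2
          * g (Function.update q.1 a q.2)))
    _ = ∑ J : Fin p → Fin n, ∑ i : Fin n,
          (η (J a) i * u (K a) i) * ((∏ b ∈ Finset.univ.erase a, u (K b) (J b)) * g J) := by
        refine Finset.sum_congr rfl fun J _ => Finset.sum_congr rfl fun i _ => ?_
        rw [hPupd J i]
        simp only [Function.update_self, Function.update_idem, Function.update_eq_self]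
        rw [hsym i (J a)]
        ring
    _ = ∑ J : Fin p → Fin n,
          (∑ i : Fin n, η (J a) i * u (K a) i)
            * ((∏ b ∈ Finset.univ.erase a, u (K b) (J b)) * g J) := by
        exact Finset.sum_congr rfl fun J _ => (Finset.sum_mul _ _ _).symm
    _ = ∑ J : Fin p → Fin n, lam (K a) * ((∏ b : Fin p, u (K b) (J b)) * g J) := by
        refine Finset.sum_congr rfl fun J _ => ?_
        rw [heig (K a) (J a),
          ← Finset.mul_prod_erase Finset.univ (fun b => u (K b) (J b)) (Finset.mem_univ a)]
        ring

theorem fop_quadratic_nonneg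
    (hsym : ∀ k l, η k l = η l k)
    (heig : ∀ r k, ∑ j : Fin n, η k j * u r j = lam r * u r k)
    (hcomp : ∀ k l : Fin n, ∑ r : Fin n, u r k * u r l = if k = l then 1 else 0)
    (hpos : ∀ K : Fin p → Fin n, Function.Injective K → 0 ≤ ∑ a : Fin p, lam (K a))
    {g : (Fin p → Fin n) → ℝ} (hg : IsAlt g) :
    0 ≤ ∑ J : Fin p → Fin n, FopMat η g J * g J := by
  rw [← tmap_isometry u hcomp (FopMat η g) g]
  have key : ∀ K : Fin p → Fin n,
      Tmap u (FopMat η g) K * Tmap u g K = (∑ a : Fin p, lam (K a)) * (Tmap u g K) ^ 2 := by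
    intro K
    rw [tmap_fopMat η u lam hsym heig g K]
    ring
  rw [Finset.sum_congr rfl fun K _ => key K]
  apply Finset.sum_nonneg
  intro K _
  by_cases hK : Function.Injective K
  · exact mul_nonneg (hpos K hK) (sq_nonneg _)
  · rw [isAlt_eq_zero_of_not_injective (isAlt_tmap u hg) hK]
    simp

end spectral


theorem swap_succAbove_castSucc (c b : Fin m) :
    Equiv.swap (Fin.castSucc c) (Fin.succ c) ((Fin.castSucc c).succAbove b)
      = (Fin.succ c).succAbove b := by
  rcases lt_trichotomy b c with h | h | h
  · rw [Fin.succAbove_of_castSucc_lt _ _ (by simpa using h)]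
    rw [Equiv.swap_apply_of_ne_of_ne (by simpa using h.ne)
      (ne_of_lt (lt_trans (by simpa using h) ((Fin.castSucc_lt_succ (i := c)))))]
    rw [Fin.succAbove_of_castSucc_lt _ _ (by simpa using h.le)]
  · subst h
    rw [Fin.succAbove_of_le_castSucc _ _ le_rfl, Equiv.swap_apply_right,
      Fin.succAbove_of_castSucc_lt _ _ ((Fin.castSucc_lt_succ (i := b)))]
  · rw [Fin.succAbove_of_le_castSucc _ _ (by simpa using h.le)]
    rw [Equiv.swap_apply_of_ne_of_ne
      (ne_of_gt (lt_trans ((Fin.castSucc_lt_succ (i := c))) (by simpa using h)))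
      (by simpa using h.ne')]
    rw [Fin.succAbove_of_le_castSucc _ _ (by simpa using h)]

theorem swap_succAbove_succ (c b : Fin m) :
    Equiv.swap (Fin.castSucc c) (Fin.succ c) ((Fin.succ c).succAbove b)
      = (Fin.castSucc c).succAbove b := by
  have := congrArg (Equiv.swap (Fin.castSucc c) (Fin.succ c)) (swap_succAbove_castSucc c b)
  rw [Equiv.swap_apply_self] at this
  exact this.symm

theorem wedge1_adjacent (τ : Fin n → ℝ) {ξ : (Fin m → Fin n) → ℝ} (hξ : IsAlt ξ)
    (J : Fin (m + 1) → Fin n) (c : Fin m) :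
    wedge1 τ ξ (J ∘ (Equiv.swap (Fin.castSucc c) (Fin.succ c)))
      = - wedge1 τ ξ J := by
  unfold wedge1
  have key : ∀ a : Fin (m + 1),
      (-1 : ℝ) ^ (a : ℕ) * τ ((J ∘ (Equiv.swap (Fin.castSucc c) (Fin.succ c))) a)
          * ξ (fun b => (J ∘ (Equiv.swap (Fin.castSucc c) (Fin.succ c))) (a.succAbove b))
      = - ((fun a' : Fin (m + 1) => (-1 : ℝ) ^ (a' : ℕ) * τ (J a')
            * ξ (fun b => J (a'.succAbove b))) ((Equiv.swap (Fin.castSucc c) (Fin.succ c)) a)) := by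
    intro a
    simp only [Function.comp_apply]
    rcases eq_or_ne a (Fin.castSucc c) with rfl | hac
    · rw [Equiv.swap_apply_left]
      have h2 : (fun b => J ((Equiv.swap (Fin.castSucc c) (Fin.succ c))
          ((Fin.castSucc c).succAbove b))) = fun b => J ((Fin.succ c).succAbove b) :=
        funext fun b => by rw [swap_succAbove_castSucc]
      rw [h2, Fin.coe_castSucc, Fin.val_succ]
      ring
    rcases eq_or_ne a (Fin.succ c) with rfl | has
    · rw [Equiv.swap_apply_right]
      have h2 : (fun b => J ((Equiv.swap (Fin.castSucc c) (Fin.succ c))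
          ((Fin.succ c).succAbove b))) = fun b => J ((Fin.castSucc c).succAbove b) :=
        funext fun b => by rw [swap_succAbove_succ]
      rw [h2, Fin.coe_castSucc, Fin.val_succ]
      ring
    · rw [Equiv.swap_apply_of_ne_of_ne hac has]
      obtain ⟨b1, hb1⟩ := Fin.exists_succAbove_eq (Ne.symm hac)
      obtain ⟨b2, hb2⟩ := Fin.exists_succAbove_eq (Ne.symm has)
      have hb12 : b1 ≠ b2 := fun h => ((Fin.castSucc_lt_succ (i := c))).ne (by rw [← hb1, h, hb2])
      have h2 : (fun b => J ((Equiv.swap (Fin.castSucc c) (Fin.succ c)) (a.succAbove b)))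
          = (fun b => J (a.succAbove b)) ∘ (Equiv.swap b1 b2) := by
        funext b
        simp only [Function.comp_apply]
        rw [← hb1, ← hb2, Function.Injective.swap_apply Fin.succAbove_right_injective]
      rw [h2, hξ (fun b => J (a.succAbove b)) (Equiv.swap b1 b2),
        Equiv.Perm.sign_swap hb12]
      push_cast
      ring
  calc ∑ a : Fin (m + 1), (-1 : ℝ) ^ (a : ℕ)
          * τ ((J ∘ (Equiv.swap (Fin.castSucc c) (Fin.succ c))) a)
          * ξ (fun b => (J ∘ (Equiv.swap (Fin.castSucc c) (Fin.succ c))) (a.succAbove b))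
      = ∑ a : Fin (m + 1),
          - ((fun a' : Fin (m + 1) => (-1 : ℝ) ^ (a' : ℕ) * τ (J a')
            * ξ (fun b => J (a'.succAbove b))) ((Equiv.swap (Fin.castSucc c) (Fin.succ c)) a)) := by
        exact Finset.sum_congr rfl fun a _ => key a
    _ = - ∑ a : Fin (m + 1),
          (fun a' : Fin (m + 1) => (-1 : ℝ) ^ (a' : ℕ) * τ (J a')
            * ξ (fun b => J (a'.succAbove b))) ((Equiv.swap (Fin.castSucc c) (Fin.succ c)) a) := by
        rw [Finset.sum_neg_distrib]
    _ = - ∑ a : Fin (m + 1), (-1 : ℝ) ^ (a : ℕ) * τ (J a) * ξ (fun b => J (a.succAbove b)) := by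
        congr 1
        exact Equiv.sum_comp (Equiv.swap (Fin.castSucc c) (Fin.succ c))
          (fun a' : Fin (m + 1) => (-1 : ℝ) ^ (a' : ℕ) * τ (J a')
            * ξ (fun b => J (a'.succAbove b)))

theorem isAlt_wedge1 (τ : Fin n → ℝ) {ξ : (Fin m → Fin n) → ℝ} (hξ : IsAlt ξ) :
    IsAlt (wedge1 τ ξ) := by
  have main : ∀ σ : Equiv.Perm (Fin (m + 1)), ∀ J : Fin (m + 1) → Fin n,
      wedge1 τ ξ (J ∘ σ) = ((Equiv.Perm.sign σ : ℤ) : ℝ) * wedge1 τ ξ J := by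
    intro σ
    have hσ : σ ∈ Submonoid.closure
        (Set.range fun c : Fin m => Equiv.swap (Fin.castSucc c) (Fin.succ c)) := by
      rw [Equiv.Perm.mclosure_swap_castSucc_succ]
      trivial
    induction hσ using Submonoid.closure_induction with
    | mem x hx =>
        obtain ⟨c, rfl⟩ := hx
        intro J
        rw [wedge1_adjacent τ hξ J c, Equiv.Perm.sign_swap ((Fin.castSucc_lt_succ (i := c))).ne]
        push_cast
        ring
    | one =>
        intro J
        simp only [Equiv.Perm.coe_one, Function.comp_id, map_one]
        norm_num
    | mul x y _ _ hx hy =>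
        intro J
        have hxy : J ∘ (x * y) = (J ∘ x) ∘ y := rfl
        rw [hxy, hy (J ∘ x), hx J, map_mul]
        push_cast
        ring
  exact fun J σ => main σ J


end Stmt5Aux

/-- If the quadratic form `θ − τ ⊗ τ` is `p`-positive semi-definite (every sum of
`p = m+1` of its eigenvalues is nonnegative), then for every `(p−1)`-form `ξ` the
`p`-form `τ ∧ ξ` lies in the image of `F_θ` (acting on alternating `p`-forms). -/
theorem stmt5 (n m : ℕ) (θ : Matrix (Fin n) (Fin n) ℝ) (hθ : θ.IsSymm)
    (τ : Fin n → ℝ)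
    (hH : (θ - Matrix.vecMulVec τ τ).IsHermitian)
    (hpsd : ∀ s : Finset (Fin n), s.card = m + 1 → 0 ≤ ∑ i ∈ s, hH.eigenvalues i)
    (ξ : (Fin m → Fin n) → ℝ) (hξ : IsAlt ξ) :
    ∃ g : (Fin (m + 1) → Fin n) → ℝ, IsAlt g ∧ FopMat θ g = wedge1 τ ξ := by
  classical
  set η : Matrix (Fin n) (Fin n) ℝ := θ - Matrix.vecMulVec τ τ with hη
  set u : Fin n → Fin n → ℝ := fun r k => hH.eigenvectorBasis r k with hu
  set lam : Fin n → ℝ := hH.eigenvalues with hlam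
  have hsymη : ∀ k l, η k l = η l k := by
    intro k l
    have h := hH.apply l k
    simpa using h
  have heig : ∀ r k, ∑ j : Fin n, η k j * u r j = lam r * u r k := by
    intro r k
    have h := hH.mulVec_eigenvectorBasis r
    have h2 := congrFun h k
    simpa [Matrix.mulVec, dotProduct, hu, hlam] using h2
  have hBBt : ∀ i j, ∑ k : Fin n, u i k * u j k = if i = j then 1 else 0 := by
    intro i j
    have horth := hH.eigenvectorBasis.orthonormal
    rw [orthonormal_iff_ite] at horth
    have h := horth i j
    simpa [PiLp.inner_apply, RCLike.inner_apply, hu, mul_comm] using h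
  have hcomp : ∀ k l : Fin n, ∑ r : Fin n, u r k * u r l = if k = l then 1 else 0 := by
    set B : Matrix (Fin n) (Fin n) ℝ := Matrix.of u with hBdef
    have hB1 : B * B.transpose = 1 := by
      ext i j
      simp only [Matrix.mul_apply, Matrix.transpose_apply, hBdef, Matrix.of_apply,
        Matrix.one_apply]
      exact hBBt i j
    have hB2 : B.transpose * B = 1 := mul_eq_one_comm.mp hB1
    intro k l
    have h : (B.transpose * B) k l = (1 : Matrix (Fin n) (Fin n) ℝ) k l := by
      rw [hB2]
    simpa [Matrix.mul_apply, Matrix.transpose_apply, Matrix.one_apply, hBdef] using h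
  have hpos : ∀ K : Fin (m + 1) → Fin n, Function.Injective K →
      0 ≤ ∑ a : Fin (m + 1), lam (K a) := by
    intro K hK
    have himg : ∑ i ∈ Finset.univ.image K, lam i = ∑ a : Fin (m + 1), lam (K a) :=
      Finset.sum_image (fun x _ y _ h => hK h)
    rw [← himg]
    refine hpsd _ ?_
    rw [Finset.card_image_of_injective _ hK]
    simp
  let A : Submodule ℝ (EuclideanSpace ℝ (Fin (m + 1) → Fin n)) :=
    { carrier := {g : (EuclideanSpace ℝ (Fin (m + 1) → Fin n)) | IsAlt g}
      zero_mem' := Stmt5Aux.isAlt_zero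
      add_mem' := fun hg hh => Stmt5Aux.isAlt_add hg hh
      smul_mem' := fun c _ hg => Stmt5Aux.isAlt_smul c hg }
  let Fop : (EuclideanSpace ℝ (Fin (m + 1) → Fin n)) →ₗ[ℝ] (EuclideanSpace ℝ (Fin (m + 1) → Fin n)) :=
    { toFun := fun g => WithLp.toLp 2 (FopMat θ g)
      map_add' := fun g h => congrArg (WithLp.toLp 2) (Stmt5Aux.fopMat_add θ g h)
      map_smul' := fun c g => congrArg (WithLp.toLp 2) (Stmt5Aux.fopMat_smul θ c g) }
  have hFA : ∀ g ∈ A, Fop g ∈ A := fun g hg => Stmt5Aux.isAlt_fopMat θ hg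
  let F' : ↥A →ₗ[ℝ] ↥A := Fop.restrict hFA
  have hinner : ∀ x y : (EuclideanSpace ℝ (Fin (m + 1) → Fin n)), (inner ℝ x y : ℝ) = ∑ J : Fin (m + 1) → Fin n, x J * y J := by
    intro x y
    simp [PiLp.inner_apply, RCLike.inner_apply, mul_comm]
  have hsymF : ∀ x y : ↥A, (inner ℝ (F' x) y : ℝ) = inner ℝ x (F' y) := by
    intro x y
    have h1 : (inner ℝ (F' x) y : ℝ) = inner ℝ (Fop (x : (EuclideanSpace ℝ (Fin (m + 1) → Fin n)))) (y : (EuclideanSpace ℝ (Fin (m + 1) → Fin n))) := rfl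
    have h2 : (inner ℝ x (F' y) : ℝ) = inner ℝ (x : (EuclideanSpace ℝ (Fin (m + 1) → Fin n))) (Fop (y : (EuclideanSpace ℝ (Fin (m + 1) → Fin n)))) := rfl
    rw [h1, h2, hinner, hinner]
    exact Stmt5Aux.fopMat_symm hθ (x : (EuclideanSpace ℝ (Fin (m + 1) → Fin n))) (y : (EuclideanSpace ℝ (Fin (m + 1) → Fin n)))
  have horto : (LinearMap.range F')ᗮ = LinearMap.ker F' := by
    ext x
    rw [Submodule.mem_orthogonal, LinearMap.mem_ker]
    constructor
    · intro h
      have h2 : (inner ℝ (F' x) (F' x) : ℝ) = 0 :=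
        Eq.trans (hsymF (F' x) x).symm (h _ ⟨F' x, rfl⟩)
      exact inner_self_eq_zero.mp h2
    · intro h u' hu'
      obtain ⟨y, rfl⟩ := hu'
      rw [hsymF y x, h, inner_zero_right]
  have hrange : LinearMap.range F' = (LinearMap.ker F')ᗮ := by
    rw [← horto, Submodule.orthogonal_orthogonal]
  have ht : IsAlt (wedge1 τ ξ) := Stmt5Aux.isAlt_wedge1 τ hξ
  let t' : ↥A := ⟨WithLp.toLp 2 (wedge1 τ ξ), ht⟩
  have ht' : t' ∈ LinearMap.range F' := by
    rw [hrange, Submodule.mem_orthogonal]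
    intro g' hg'
    rw [LinearMap.mem_ker] at hg'
    have hgalt : IsAlt ((g' : ↥A) : (EuclideanSpace ℝ (Fin (m + 1) → Fin n))) := g'.2
    have hFz : FopMat θ ((g' : ↥A) : (EuclideanSpace ℝ (Fin (m + 1) → Fin n))) = 0 := congrArg (fun x => WithLp.ofLp (Subtype.val x)) hg'
    have hquad : ∑ J : Fin (m + 1) → Fin n,
        FopMat θ ((g' : ↥A) : (EuclideanSpace ℝ (Fin (m + 1) → Fin n))) J * ((g' : ↥A) : (EuclideanSpace ℝ (Fin (m + 1) → Fin n))) J = 0 := by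
      rw [hFz]
      simp
    have hθeq : θ = η + Matrix.vecMulVec τ τ := by rw [hη]; abel
    have hsplit : ∑ J : Fin (m + 1) → Fin n,
        FopMat θ ((g' : ↥A) : (EuclideanSpace ℝ (Fin (m + 1) → Fin n))) J * ((g' : ↥A) : (EuclideanSpace ℝ (Fin (m + 1) → Fin n))) J
      = (∑ J : Fin (m + 1) → Fin n, FopMat η ((g' : ↥A) : (EuclideanSpace ℝ (Fin (m + 1) → Fin n))) J * ((g' : ↥A) : (EuclideanSpace ℝ (Fin (m + 1) → Fin n))) J)
        + ∑ J : Fin (m + 1) → Fin n,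
            FopMat (Matrix.vecMulVec τ τ) ((g' : ↥A) : (EuclideanSpace ℝ (Fin (m + 1) → Fin n))) J * ((g' : ↥A) : (EuclideanSpace ℝ (Fin (m + 1) → Fin n))) J := by
      rw [← Finset.sum_add_distrib]
      refine Finset.sum_congr rfl fun J _ => ?_
      rw [hθeq, Stmt5Aux.fopMat_matrix_add]
      ring
    have h1 : 0 ≤ ∑ J : Fin (m + 1) → Fin n,
        FopMat η ((g' : ↥A) : (EuclideanSpace ℝ (Fin (m + 1) → Fin n))) J * ((g' : ↥A) : (EuclideanSpace ℝ (Fin (m + 1) → Fin n))) J :=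
      Stmt5Aux.fop_quadratic_nonneg η u lam hsymη heig hcomp hpos hgalt
    have h2eq := Stmt5Aux.sum_fop_vecMulVec τ hgalt
    have h2 : 0 ≤ ∑ J : Fin (m + 1) → Fin n,
        FopMat (Matrix.vecMulVec τ τ) ((g' : ↥A) : (EuclideanSpace ℝ (Fin (m + 1) → Fin n))) J * ((g' : ↥A) : (EuclideanSpace ℝ (Fin (m + 1) → Fin n))) J := by
      rw [h2eq]
      refine Finset.sum_nonneg fun a _ => Finset.sum_nonneg fun J' _ => sq_nonneg _
    have hz2 : ∑ J : Fin (m + 1) → Fin n,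
        FopMat (Matrix.vecMulVec τ τ) ((g' : ↥A) : (EuclideanSpace ℝ (Fin (m + 1) → Fin n))) J * ((g' : ↥A) : (EuclideanSpace ℝ (Fin (m + 1) → Fin n))) J = 0 := by
      linarith [hquad, hsplit, h1, h2]
    have hcontr : ∀ J' : Fin m → Fin n, Stmt5Aux.contr τ ((g' : ↥A) : (EuclideanSpace ℝ (Fin (m + 1) → Fin n))) J' = 0 := by
      rw [h2eq] at hz2
      have houter := (Finset.sum_eq_zero_iff_of_nonneg
        (fun a _ => Finset.sum_nonneg fun J' _ => sq_nonneg
          (Stmt5Aux.contr τ ((g' : ↥A) : (EuclideanSpace ℝ (Fin (m + 1) → Fin n))) J'))).mp hz2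
      have hinner2 := (Finset.sum_eq_zero_iff_of_nonneg
        (fun J' _ => sq_nonneg (Stmt5Aux.contr τ ((g' : ↥A) : (EuclideanSpace ℝ (Fin (m + 1) → Fin n))) J'))).mp
        (houter (0 : Fin (m + 1)) (Finset.mem_univ _))
      intro J'
      exact (pow_eq_zero_iff two_ne_zero).mp (hinner2 J' (Finset.mem_univ _))
    have hw := Stmt5Aux.sum_wedge_mul τ ξ hgalt
    have hfinal : (inner ℝ ((g' : ↥A) : (EuclideanSpace ℝ (Fin (m + 1) → Fin n))) (WithLp.toLp 2 (wedge1 τ ξ) : (EuclideanSpace ℝ (Fin (m + 1) → Fin n))) : ℝ) = 0 := by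
      rw [hinner]
      calc ∑ J : Fin (m + 1) → Fin n, ((g' : ↥A) : (EuclideanSpace ℝ (Fin (m + 1) → Fin n))) J * wedge1 τ ξ J
          = ∑ J : Fin (m + 1) → Fin n, wedge1 τ ξ J * ((g' : ↥A) : (EuclideanSpace ℝ (Fin (m + 1) → Fin n))) J :=
            Finset.sum_congr rfl fun J _ => mul_comm _ _
        _ = ∑ _a : Fin (m + 1), ∑ J' : Fin m → Fin n,
              ξ J' * Stmt5Aux.contr τ ((g' : ↥A) : (EuclideanSpace ℝ (Fin (m + 1) → Fin n))) J' := hw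
        _ = 0 := by
            refine Finset.sum_eq_zero fun a _ => Finset.sum_eq_zero fun J' _ => ?_
            rw [hcontr J']
            ring
    exact hfinal
  obtain ⟨gsol, hgsol⟩ := ht'
  exact ⟨WithLp.ofLp (gsol : (EuclideanSpace ℝ (Fin (m + 1) → Fin n))), gsol.2, congrArg (fun x => WithLp.ofLp (Subtype.val x)) hgsol⟩
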